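/- arXiv:2011.00352 — 3 statements merged into one kernel-verified Lean document; each statement's English description precedes it below -/
import Mathlib

section
/- Let A be a finite alphabet and u : ℕ → A a word such that fac(u) is inexhaustible. If fac(u) has an infinite proper initial segment — that is, an infinite subset B ⊊ fac(u) that is downward closed under the factor (infix) relation — then fac(u) contains an infinite antichain with respect to the factor (infix) order (in particular fac(u) is not well-quasi-ordered). -/
open SimpleGraph

/-- An induced path of length `n` in `G`: an injective sequence of `n+1` vertices,
adjacent exactly when consecutive. -/
def IsInducedPath {V : Type*} (G : SimpleGraph V) {n : ℕ} (x : Fin (n + 1) → V) : Prop :=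
  Function.Injective x ∧ ∀ i j, G.Adj (x i) (x j) ↔ Nat.dist i.val j.val = 1

/-- `G` contains finite induced paths of unbounded length. -/
def HasUnboundedPaths {V : Type*} (G : SimpleGraph V) : Prop :=
  ∀ n : ℕ, ∃ x : Fin (n + 1) → V, IsInducedPath G x

/-- `G` is path-minimal. -/
def PathMinimal {V : Type*} (G : SimpleGraph V) : Prop :=
  HasUnboundedPaths G ∧
    ∀ A : Set V, HasUnboundedPaths (G.induce A) → Nonempty (G ↪g G.induce A)

/-- The age of `G` is contained in the age of `H`. -/
def AgeSubset {V W : Type*} (G : SimpleGraph V) (H : SimpleGraph W) : Prop :=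
  ∀ (n : ℕ) (F : SimpleGraph (Fin n)), Nonempty (F ↪g G) → Nonempty (F ↪g H)

/-- The age of `G` contains no infinite antichain for embeddability. -/
def AgeWQO {V : Type*} (G : SimpleGraph V) : Prop :=
  ∀ f : ℕ → Σ n : ℕ, SimpleGraph (Fin n),
    (∀ i, Nonempty ((f i).2 ↪g G)) →
    ∃ i j, i ≠ j ∧ Nonempty ((f i).2 ↪g (f j).2)

/-- The set `A` carries an induced path of length `n` of `G` (covering all of `A`). -/
def IsPathOn {V : Type*} (G : SimpleGraph V) (A : Set V) (n : ℕ) : Prop :=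
  ∃ x : Fin (n + 1) → V, Function.Injective x ∧ Set.range x = A ∧
    ∀ i j, G.Adj (x i) (x j) ↔ Nat.dist i.val j.val = 1

/-- `G` embeds a direct sum of finite induced paths of unbounded length. -/
def EmbedsDirectSumOfPaths {V : Type*} (G : SimpleGraph V) : Prop :=
  ∃ A : ℕ → Set V, (∀ n, (A n).Finite) ∧
    (∀ m n, m ≠ n → Disjoint (A m) (A n)) ∧
    (∀ m n, m ≠ n → ∀ x ∈ A m, ∀ y ∈ A n, ¬ G.Adj x y) ∧
    ∀ n, ∃ m, n ≤ m ∧ IsPathOn G (A n) m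

/-- `G` embeds a complete sum of finite induced paths of unbounded length. -/
def EmbedsCompleteSumOfPaths {V : Type*} (G : SimpleGraph V) : Prop :=
  ∃ A : ℕ → Set V, (∀ n, (A n).Finite) ∧
    (∀ m n, m ≠ n → Disjoint (A m) (A n)) ∧
    (∀ m n, m ≠ n → ∀ x ∈ A m, ∀ y ∈ A n, G.Adj x y) ∧
    ∀ n, ∃ m, n ≤ m ∧ IsPathOn G (A n) m

/-- An isometric path of length `n` in `G`. -/
def IsIsometricPath {V : Type*} (G : SimpleGraph V) {n : ℕ} (x : Fin (n + 1) → V) : Prop :=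
  (∀ i : Fin n, G.Adj (x i.castSucc) (x i.succ)) ∧
  ∀ i j, G.dist (x i) (x j) = Nat.dist i.val j.val

/-- The set `A` carries an induced path of length `n` of `G` which is isometric in `G`. -/
def IsIsometricPathOn {V : Type*} (G : SimpleGraph V) (A : Set V) (n : ℕ) : Prop :=
  ∃ x : Fin (n + 1) → V, Function.Injective x ∧ Set.range x = A ∧
    (∀ i j, G.Adj (x i) (x j) ↔ Nat.dist i.val j.val = 1) ∧
    (∀ i j, G.dist (x i) (x j) = Nat.dist i.val j.val)

/-- The incomparability graph of a poset. -/
def incGraph (α : Type*) [PartialOrder α] : SimpleGraph α where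
  Adj a b := ¬ a ≤ b ∧ ¬ b ≤ a
  symm := ⟨fun _ _ h => ⟨h.2, h.1⟩⟩
  loopless := ⟨fun _ h => h.1 le_rfl⟩

/-- `w` is a (finite) factor of the infinite word `u`. -/
def IsFactor {A : Type*} (u : ℕ → A) (w : List A) : Prop :=
  ∃ p : ℕ, w = (List.range w.length).map fun i => u (p + i)

/-- `u` is uniformly recurrent. -/
def UniformlyRecurrent {A : Type*} (u : ℕ → A) : Prop :=
  ∀ n : ℕ, ∃ m : ℕ, ∀ v w : List A, IsFactor u v → IsFactor u w →
    v.length = n → w.length = m → v <:+: w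

/-- The set of factors of `u` is inexhaustible. -/
def Inexhaustible {A : Type*} (u : ℕ → A) : Prop :=
  ∀ v v' : List A, IsFactor u v → IsFactor u v' → ∃ w : List A, IsFactor u (v ++ w ++ v')

/-- The path on `n` vertices. -/
def pathG (n : ℕ) : SimpleGraph (Fin n) where
  Adj i j := Nat.dist i.val j.val = 1
  symm := ⟨fun i j h => by try dsimp only at h ⊢
                           rwa [Nat.dist_comm]⟩
  loopless := ⟨fun i h => by try dsimp only at h
                             simp [Nat.dist_self] at h⟩

/-- The graph `Ĝ_k` on `ℕ × ℕ`. -/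
def Ghat (k : ℕ) : SimpleGraph (ℕ × ℕ) where
  Adj a b := (a.1 = b.1 ∧ Nat.dist a.2 b.2 = 1) ∨ (a.1 ≠ b.1 ∧ ¬ a.2 ≡ b.2 [MOD k])
  symm := by
    constructor
    intro a b h
    rcases h with ⟨h1, h2⟩ | ⟨h1, h2⟩
    · exact Or.inl ⟨h1.symm, by rwa [Nat.dist_comm]⟩
    · exact Or.inr ⟨h1.symm, fun h => h2 h.symm⟩
  loopless := by
    constructor
    intro a h
    rcases h with ⟨_, h2⟩ | ⟨h1, _⟩
    · simp [Nat.dist_self] at h2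
    · exact h1 rfl

/-- The vertex set of `Q̂_k`. -/
def Qset : Set (ℕ × ℕ) := {p : ℕ × ℕ | p.2 < p.1 + 5}

/-- The graph `Q̂_k`, induced by `Ĝ_k` on `Qset`. -/
def Qhat (k : ℕ) : SimpleGraph Qset := (Ghat k).induce Qset

/-- `M` is a module (autonomous set) of `G`. -/
def IsModule {V : Type*} (G : SimpleGraph V) (M : Set V) : Prop :=
  ∀ v ∉ M, (∀ x ∈ M, G.Adj v x) ∨ (∀ x ∈ M, ¬ G.Adj v x)

/-- A trivial subset of a vertex set: empty, a singleton, or everything. -/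
def IsTrivialSet {V : Type*} (M : Set V) : Prop :=
  M = ∅ ∨ (∃ v, M = {v}) ∨ M = Set.univ

/-- The graph `Ĝ_{u,⊕}` associated with the word `u : ℕ → Bool` and the Boolean sum. -/
def GhatXor (u : ℕ → Bool) : SimpleGraph (ℕ × ℕ) where
  Adj a b := (a.1 = b.1 ∧ Nat.dist a.2 b.2 = 1) ∨ (a.1 ≠ b.1 ∧ u a.2 ≠ u b.2)
  symm := by
    constructor
    intro a b h
    rcases h with ⟨h1, h2⟩ | ⟨h1, h2⟩
    · exact Or.inl ⟨h1.symm, by rwa [Nat.dist_comm]⟩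
    · exact Or.inr ⟨h1.symm, h2.symm⟩
  loopless := by
    constructor
    intro a h
    rcases h with ⟨_, h2⟩ | ⟨h1, _⟩
    · simp [Nat.dist_self] at h2
    · exact h1 rfl

/-- The graph `Ĝ_{u,π₂}` associated with the word `u : ℕ → Bool` and the second projection. -/
def GhatPi2 (u : ℕ → Bool) : SimpleGraph (ℕ × ℕ) where
  Adj a b := (a.1 = b.1 ∧ Nat.dist a.2 b.2 = 1) ∨
    (a.1 < b.1 ∧ u b.2 = true) ∨ (b.1 < a.1 ∧ u a.2 = true)
  symm := by
    constructor
    intro a b h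
    rcases h with ⟨h1, h2⟩ | ⟨h1, h2⟩ | ⟨h1, h2⟩
    · exact Or.inl ⟨h1.symm, by rwa [Nat.dist_comm]⟩
    · exact Or.inr (Or.inr ⟨h1, h2⟩)
    · exact Or.inr (Or.inl ⟨h1, h2⟩)
  loopless := by
    constructor
    intro a h
    rcases h with ⟨_, h2⟩ | ⟨h1, _⟩ | ⟨h1, _⟩
    · simp [Nat.dist_self] at h2
    · exact lt_irrefl _ h1
    · exact lt_irrefl _ h1

/-- `u` has a constant factor of length `m`. -/
def HasConstFactor (u : ℕ → Bool) (m : ℕ) : Prop :=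
  ∃ p : ℕ, ∀ i < m, u (p + i) = u p

namespace SegAux
variable {A : Type*}

def seg (u : ℕ → A) (p n : ℕ) : List A := (List.range n).map fun i => u (p + i)

@[simp] lemma seg_length (u : ℕ → A) (p n : ℕ) : (seg u p n).length = n := by simp [seg]

lemma seg_append (u : ℕ → A) (p m n : ℕ) :
    seg u p (m + n) = seg u p m ++ seg u (p + m) n := by
  simp only [seg, List.range_add, List.map_append, List.map_map]
  congr 1
  apply List.map_congr_left
  intro a _
  simp [Function.comp, Nat.add_assoc]

lemma seg_isFactor (u : ℕ → A) (p n : ℕ) : IsFactor u (seg u p n) := ⟨p, by rw [seg_length]; rfl⟩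

lemma seg_ext {u : ℕ → A} {p q n : ℕ} (h : ∀ i < n, u (p + i) = u (q + i)) :
    seg u p n = seg u q n := by
  apply List.map_congr_left
  intro a ha
  exact h a (List.mem_range.mp ha)

lemma seg_eq_apply {u : ℕ → A} {p q n : ℕ} (h : seg u p n = seg u q n) :
    ∀ i < n, u (p + i) = u (q + i) := by
  intro i hi
  have := congrArg (fun l => l[i]?) h
  simpa [seg, hi] using this

lemma append_seg {u : ℕ → A} {l₁ l₂ : List A} {p m : ℕ}
    (h : l₁ ++ l₂ = seg u p m) :
    l₁ = seg u p l₁.length ∧ l₂ = seg u (p + l₁.length) l₂.length := by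
  have hm : m = l₁.length + l₂.length := by
    have := congrArg List.length h
    simp at this; omega
  subst hm
  rw [seg_append] at h
  exact List.append_inj h (by simp)

lemma seg_infix {u : ℕ → A} {q q' m n : ℕ} (h : seg u q m <:+: seg u q' n) :
    ∃ a, a + m ≤ n ∧ seg u q m = seg u (q' + a) m := by
  obtain ⟨s, t, hst⟩ := h
  rw [List.append_assoc] at hst
  obtain ⟨-, h1⟩ := append_seg hst
  obtain ⟨h2, -⟩ := append_seg h1
  have hlen : s.length + ((seg u q m).length + t.length) = n := by
    have := congrArg List.length hst
    simpa using this
  simp only [seg_length] at h2 hlen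
  exact ⟨s.length, by omega, h2⟩

end SegAux

open SegAux in
theorem infinite_proper_initial_segment_yields_antichain
    {A : Type*} [Fintype A] (u : ℕ → A)
    (hin : Inexhaustible u)
    (B : Set (List A)) (hBsub : B ⊆ {w : List A | IsFactor u w})
    (hBne : B ≠ {w : List A | IsFactor u w})
    (hBinf : B.Infinite)
    (hBdc : ∀ v w : List A, w ∈ B → v <:+: w → v ∈ B) :
    ∃ f : ℕ → List A, (∀ i, IsFactor u (f i)) ∧ ∀ i j, i ≠ j → ¬ f i <:+: f j := by
  
  classical
  obtain ⟨w, hwF, hwB⟩ : ∃ w, IsFactor u w ∧ w ∉ B := by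
    by_contra h
    push_neg at h
    exact hBne (Set.Subset.antisymm hBsub (fun w hw => h w hw))
  have hnil : ([] : List A) ∈ B := by
    obtain ⟨b, hb⟩ := hBinf.nonempty
    exact hBdc [] b hb List.nil_infix
  have hW : 0 < w.length := by
    rcases Nat.eq_zero_or_pos w.length with h | h
    · rw [List.length_eq_zero_iff] at h; rw [h] at hwB; exact absurd hnil hwB
    · exact h
  have hlong : ∀ n, ∃ b ∈ B, n ≤ b.length := by
    intro n
    by_contra h
    push_neg at h
    exact hBinf ((List.finite_length_lt A n).subset (fun b hb => h b hb))
  -- no occurrence of w inside an element of B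
  have hnoB : ∀ b ∈ B, ∀ s a c, b = seg u s (a + (w.length + c)) →
      w ≠ seg u (s + a) w.length := by
    intro b hbB s a c hb hocc
    apply hwB
    apply hBdc w b hbB
    refine ⟨seg u s a, seg u (s + a + w.length) c, ?_⟩
    rw [hb, seg_append, seg_append, hocc, List.append_assoc]
    simp
  -- KEY: arbitrarily long segments in which w occurs exactly at the two ends
  have key : ∀ n, ∃ q d, n ≤ d ∧ w = seg u q w.length ∧ w = seg u (q + d) w.length ∧
      ∀ t, q ≤ t → t ≤ q + d → w = seg u t w.length → t = q ∨ t = q + d := by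
    intro n
    obtain ⟨b, hbB, hbl⟩ := hlong (n + w.length + 1)
    obtain ⟨x, hx⟩ := hin w b hwF (hBsub hbB)
    obtain ⟨y, hy⟩ := hin (w ++ x ++ b) w hx hwF
    obtain ⟨p, hp⟩ := hy
    have hp' : w ++ (x ++ (b ++ (y ++ w))) =
        seg u p (w ++ (x ++ (b ++ (y ++ w)))).length := by
      have := hp
      simp only [List.append_assoc] at this
      exact this
    obtain ⟨hw0, h1⟩ := append_seg hp'
    obtain ⟨-, h2⟩ := append_seg h1
    obtain ⟨hb0, h3⟩ := append_seg h2
    obtain ⟨-, hw1⟩ := append_seg h3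
    set W := w.length with hWdef
    set X := x.length with hXdef
    set L := b.length with hLdef
    set Y := y.length with hYdef
    -- hw0 : w = seg u p W ; hb0 : b = seg u (p+W+X) L ;
    -- hw1 : w = seg u (p+W+X+L+Y) W
    have hblock : ∀ a, w = seg u (p + a) W → a + W ≤ W + X + L → a < W + X := by
      intro a hocc hle
      by_contra hge
      push_neg at hge
      obtain ⟨a', rfl⟩ : ∃ a', a = W + X + a' := ⟨a - (W + X), by omega⟩
      obtain ⟨c, hc⟩ : ∃ c, L = a' + (W + c) := ⟨L - (a' + W), by omega⟩
      refine hnoB b hbB (p + W + X) a' c (by rw [hb0, hc]) ?_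
      rw [show p + W + X + a' = p + (W + X + a') from by omega]
      exact hocc
    -- the greatest occurrence before the b-block
    have hP0 : w = seg u (p + 0) W := by simpa using hw0
    set P : ℕ → Prop := fun a => w = seg u (p + a) W with hPdef
    set a₀ : ℕ := Nat.findGreatest P (X + L) with ha₀def
    have hPa₀ : P a₀ := Nat.findGreatest_spec (Nat.zero_le _) hP0
    have ha₀le : a₀ ≤ X + L := Nat.findGreatest_le _
    have ha₀lt : a₀ < W + X := hblock a₀ hPa₀ (by omega)
    -- the least occurrence after the b-block
    have hexr : ∃ m, w = seg u (p + X + L + 1 + m) W := by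
      refine ⟨W - 1 + Y, ?_⟩
      rw [show p + X + L + 1 + (W - 1 + Y) = p + W + X + L + Y from by omega]
      exact hw1
    set m₀ : ℕ := Nat.find hexr with hm₀def
    have hPm₀ : w = seg u (p + X + L + 1 + m₀) W := Nat.find_spec hexr
    set q : ℕ := p + a₀ with hqdef
    set r : ℕ := p + X + L + 1 + m₀ with hrdef
    have hqr : q < r := by omega
    obtain ⟨d, hd⟩ : ∃ d, r = q + d := ⟨r - q, by omega⟩
    have hdn : n ≤ d := by omega
    refine ⟨q, d, hdn, hPa₀, by rw [← hd]; exact hPm₀, ?_⟩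
    intro t h1t h2t hocc
    rcases Nat.lt_or_ge t (p + X + L + 1) with hcase | hcase
    · left
      by_contra hne
      have hta : a₀ < t - p := by omega
      have := Nat.findGreatest_is_greatest (P := P) (n := X + L) hta (by omega)
      apply this
      show w = seg u (p + (t - p)) W
      rw [show p + (t - p) = t from by omega]
      exact hocc
    · right
      by_contra hne
      have htm : t - (p + X + L + 1) < m₀ := by omega
      apply Nat.find_min hexr htm
      rw [show p + X + L + 1 + (t - (p + X + L + 1)) = t from by omega]
      exact hocc
  -- two such segments of different (positive) lengths are incomparable
  have anti : ∀ q d q' d', 0 < d → d < d' →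
      w = seg u q w.length → w = seg u (q + d) w.length →
      (∀ t, q' ≤ t → t ≤ q' + d' → w = seg u t w.length → t = q' ∨ t = q' + d') →
      ¬ seg u q (d + w.length) <:+: seg u q' (d' + w.length) := by
    intro q d q' d' hd0 hdd hq hqd hexact hinf
    obtain ⟨a, ha, heq⟩ := seg_infix hinf
    have hpt := seg_eq_apply heq
    have hocc1 : w = seg u (q' + a) w.length :=
      hq.trans (seg_ext fun i _ => hpt i (by omega))
    have hocc2 : w = seg u (q' + (a + d)) w.length := by
      refine hqd.trans (seg_ext fun i hi => ?_)
      have := hpt (d + i) (by omega)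
      rw [show q + (d + i) = q + d + i from by omega,
        show q' + a + (d + i) = q' + (a + d) + i from by omega] at this
      exact this
    have e1 := hexact (q' + a) (by omega) (by omega) hocc1
    have e2 := hexact (q' + (a + d)) (by omega) (by omega) hocc2
    omega
  choose q d hd hocc1 hocc2 hexact using key
  set N : ℕ → ℕ := fun i => Nat.rec 1 (fun _ prev => d prev + 1) i with hNdef
  have hN1 : ∀ i, 1 ≤ N i := by
    intro i
    cases i with
    | zero => exact le_refl 1
    | succ i => exact Nat.le_add_left 1 _
  have hNpos : ∀ i, 0 < d (N i) := fun i => lt_of_lt_of_le (hN1 i) (hd (N i))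
  have hNsucc : ∀ i, d (N i) < d (N (i + 1)) := by
    intro i
    have h1 : N (i + 1) = d (N i) + 1 := rfl
    have := hd (N (i + 1))
    omega
  have hmono : StrictMono fun i => d (N i) := strictMono_nat_of_lt_succ hNsucc
  refine ⟨fun i => seg u (q (N i)) (d (N i) + w.length),
    fun i => seg_isFactor u _ _, ?_⟩
  intro i j hij hinf
  rcases lt_trichotomy (d (N i)) (d (N j)) with h | h | h
  · exact anti (q (N i)) (d (N i)) (q (N j)) (d (N j)) (hNpos i) h
      (hocc1 (N i)) (hocc2 (N i)) (hexact (N j)) hinf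
  · exact hij (hmono.injective h)
  · have := hinf.length_le
    simp only [seg_length] at this
    omega
end

section
/- Let u : ℕ → {0,1} be a uniformly recurrent word that is not constant. Then every induced path of length at least φ(u) in the graph Ĝ_{u,π₂} is contained in a single component: all its vertices have the same first coordinate. -/
open SimpleGraph

private lemma auxMonoRun (g : ℕ → ℕ) : ∀ N : ℕ,
    (∀ k < N, Nat.dist (g k) (g (k+1)) = 1) →
    (∀ k m, k ≤ N → m ≤ N → g k = g m → k = m) →
    (∀ k ≤ N, g k = g 0 + k) ∨ (∀ k ≤ N, g k + k = g 0) := by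
  intro N
  induction N with
  | zero =>
    intro _ _
    left; intro k hk; interval_cases k; omega
  | succ N ih =>
    intro hd hinj
    have hdN : g (N+1) = g N + 1 ∨ g N = g (N+1) + 1 := by
      have := hd N (by omega)
      rw [show Nat.dist (g N) (g (N+1)) = g N - g (N+1) + (g (N+1) - g N) from rfl] at this
      omega
    rcases ih (fun k hk => hd k (by omega)) (fun k m hk hm => hinj k m (by omega) (by omega)) with h | h
    · rcases hdN with h2 | h2
      · left; intro k hk
        rcases Nat.lt_or_ge k (N+1) with hk' | hk'
        · exact h k (by omega)
        · have hk'' : k = N + 1 := by omega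
          subst hk''
          rw [h2, h N le_rfl]
          omega
      · rcases Nat.eq_zero_or_pos N with hN | hN
        · subst hN
          right; intro k hk
          simp only [Nat.zero_add] at h2
          interval_cases k
          · omega
          · omega
        · exfalso
          have e1 : g (N-1) = g 0 + (N-1) := h (N-1) (by omega)
          have e2 : g N = g 0 + N := h N le_rfl
          have e3 : g (N+1) = g (N-1) := by omega
          have := hinj (N+1) (N-1) le_rfl (by omega) e3
          omega
    · rcases hdN with h2 | h2
      · rcases Nat.eq_zero_or_pos N with hN | hN
        · subst hN
          left; intro k hk
          simp only [Nat.zero_add] at h2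
          interval_cases k
          · omega
          · omega
        · exfalso
          have e1 : g (N-1) + (N-1) = g 0 := h (N-1) (by omega)
          have e2 : g N + N = g 0 := h N le_rfl
          have e3 : g (N+1) = g (N-1) := by omega
          have := hinj (N+1) (N-1) le_rfl (by omega) e3
          omega
      · right; intro k hk
        rcases Nat.lt_or_ge k (N+1) with hk' | hk'
        · exact h k (by omega)
        · have hk'' : k = N + 1 := by omega
          subst hk''
          have := h N le_rfl
          omega

set_option maxHeartbeats 2000000 in
theorem long_induced_path_in_GhatPi2_in_one_component
    (u : ℕ → Bool) (hur : UniformlyRecurrent u) (hnc : ∃ m n : ℕ, u m ≠ u n)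
    (l : ℕ) (hl : HasConstFactor u l) (hlmax : ∀ m, HasConstFactor u m → m ≤ l)
    {n : ℕ} (hn : (if l = 1 then 6 else 2 * (l + 1) + 1) ≤ n)
    (x : Fin (n + 1) → ℕ × ℕ) (hx : IsInducedPath (GhatPi2 u) x) :
    ∀ i j : Fin (n + 1), (x i).1 = (x j).1 := by
  classical
  obtain ⟨hinj, hadj⟩ := hx
  by_contra hcon
  push_neg at hcon
  obtain ⟨a0, b0, hab0⟩ := hcon
  have hdd : ∀ a b : ℕ, Nat.dist a b = a - b + (b - a) := fun _ _ => rfl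
  have hl1 : 1 ≤ l := hlmax 1 ⟨0, by intro i hi; interval_cases i; rfl⟩
  have hnB : (l = 1 ∧ 6 ≤ n) ∨ (2 ≤ l ∧ 2 * l + 3 ≤ n) := by
    by_cases h : l = 1
    · rw [if_pos h] at hn; exact Or.inl ⟨h, hn⟩
    · rw [if_neg h] at hn; exact Or.inr ⟨by omega, by omega⟩
  have hn5 : 5 ≤ n := by rcases hnB with ⟨_, h⟩ | ⟨_, h⟩ <;> omega
  -- adjacency consequences
  have hadj' : ∀ (i k : ℕ) (hi : i < n + 1) (hk : k < n + 1), Nat.dist i k = 1 →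
      ((x ⟨i, hi⟩).1 = (x ⟨k, hk⟩).1 ∧ Nat.dist (x ⟨i, hi⟩).2 (x ⟨k, hk⟩).2 = 1) ∨
      ((x ⟨i, hi⟩).1 < (x ⟨k, hk⟩).1 ∧ u (x ⟨k, hk⟩).2 = true) ∨
      ((x ⟨k, hk⟩).1 < (x ⟨i, hi⟩).1 ∧ u (x ⟨i, hi⟩).2 = true) :=
    fun i k hi hk h => (hadj ⟨i, hi⟩ ⟨k, hk⟩).2 h
  have hstar' : ∀ (i k : ℕ) (hi : i < n + 1) (hk : k < n + 1),
      (x ⟨i, hi⟩).1 < (x ⟨k, hk⟩).1 → u (x ⟨k, hk⟩).2 = true → Nat.dist i k = 1 :=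
    fun i k hi hk h1 h2 => (hadj ⟨i, hi⟩ ⟨k, hk⟩).1 (Or.inr (Or.inl ⟨h1, h2⟩))
  have hsame' : ∀ (i k : ℕ) (hi : i < n + 1) (hk : k < n + 1), Nat.dist i k = 1 →
      (x ⟨i, hi⟩).1 = (x ⟨k, hk⟩).1 → Nat.dist (x ⟨i, hi⟩).2 (x ⟨k, hk⟩).2 = 1 := by
    intro i k hi hk hd hc
    rcases hadj' i k hi hk hd with ⟨_, h⟩ | ⟨h, _⟩ | ⟨h, _⟩
    · exact h
    · omega
    · omega
  -- minimal column
  obtain ⟨i0, -, hmin⟩ := Finset.exists_min_image Finset.univ (fun i : Fin (n + 1) => (x i).1)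
    ⟨a0, Finset.mem_univ _⟩
  obtain ⟨p, hplt⟩ := i0
  have hmin' : ∀ (k : ℕ) (hk : k < n + 1), (x ⟨p, hplt⟩).1 ≤ (x ⟨k, hk⟩).1 :=
    fun k hk => hmin ⟨k, hk⟩ (Finset.mem_univ _)
  have hpn : p ≤ n := by omega
  -- constancy of the column on intervals with no "hot above-minimum" vertex
  have hconst : ∀ a b : ℕ, b ≤ n → a ≤ b →
      (∀ k, a ≤ k → k ≤ b → ∀ hk : k < n + 1,
        ¬(u (x ⟨k, hk⟩).2 = true ∧ (x ⟨p, hplt⟩).1 < (x ⟨k, hk⟩).1)) →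
      ∀ k, a ≤ k → k ≤ b → ∀ (hk : k < n + 1) (ha : a < n + 1),
        (x ⟨k, hk⟩).1 = (x ⟨a, ha⟩).1 := by
    intro a b hb hab hno k hk1
    induction k, hk1 using Nat.le_induction with
    | base => intro _ _ _; rfl
    | succ k hk ih =>
      intro hkb hk2 ha
      have ih' := ih (by omega) (by omega) ha
      have hdist : Nat.dist k (k + 1) = 1 := by rw [hdd]; omega
      rcases hadj' k (k + 1) (by omega) hk2 hdist with ⟨h1, _⟩ | ⟨h1, h2⟩ | ⟨h1, h2⟩
      · exact h1.symm.trans ih'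
      · exact absurd ⟨h2, lt_of_le_of_lt (hmin' k (by omega)) h1⟩
          (hno (k + 1) (by omega) hkb hk2)
      · exact absurd ⟨h2, lt_of_le_of_lt (hmin' (k + 1) hk2) h1⟩
          (hno k (by omega) (by omega) (by omega))
  -- cold runs are short
  have hcold : ∀ a b : ℕ, b ≤ n → a ≤ b →
      (∀ k, a ≤ k → k ≤ b → ∀ hk : k < n + 1,
        ¬(u (x ⟨k, hk⟩).2 = true ∧ (x ⟨p, hplt⟩).1 < (x ⟨k, hk⟩).1)) →
      (∀ ha : a < n + 1, (x ⟨a, ha⟩).1 ≠ (x ⟨p, hplt⟩).1) →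
      b - a + 1 ≤ l := by
    intro a b hb hab hno hcne
    have hccol := hconst a b hb hab hno
    have hcoldk : ∀ k, a ≤ k → k ≤ b → ∀ hk : k < n + 1, u (x ⟨k, hk⟩).2 = false := by
      intro k h1 h2 hk
      cases hu : u (x ⟨k, hk⟩).2
      · rfl
      · exfalso
        refine hno k h1 h2 hk ⟨hu, ?_⟩
        exact (lt_of_le_of_ne (hmin' a (by omega)) (Ne.symm (hcne _))).trans_eq
          (hccol k h1 h2 hk (by omega)).symm
    set g : ℕ → ℕ := fun d => (x ⟨min (a + d) b, by omega⟩).2 with hgdef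
    have hg_eq : ∀ d, d ≤ b - a → ∀ h : a + d < n + 1, g d = (x ⟨a + d, h⟩).2 := by
      intro d hd h
      rw [hgdef]
      apply congrArg (fun z : Fin (n + 1) => (x z).2)
      exact Fin.ext (show min (a + d) b = a + d by omega)
    have hd1 : ∀ k < b - a, Nat.dist (g k) (g (k + 1)) = 1 := by
      intro k hk
      rw [hg_eq k (by omega) (by omega), hg_eq (k + 1) (by omega) (by omega)]
      refine hsame' (a + k) (a + k + 1) (by omega) (by omega) (by rw [hdd]; omega) ?_
      exact (hccol (a + k) (by omega) (by omega) (by omega) (by omega)).trans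
        (hccol (a + k + 1) (by omega) (by omega) (by omega) (by omega)).symm
    have hinjg : ∀ k m, k ≤ b - a → m ≤ b - a → g k = g m → k = m := by
      intro k m hk hm he
      rw [hg_eq k hk (by omega), hg_eq m hm (by omega)] at he
      have hcc1 : (x ⟨a + k, by omega⟩).1 = (x ⟨a + m, by omega⟩).1 :=
        (hccol (a + k) (by omega) (by omega) (by omega) (by omega)).trans
          (hccol (a + m) (by omega) (by omega) (by omega) (by omega)).symm
      have hxe : x ⟨a + k, by omega⟩ = x ⟨a + m, by omega⟩ := Prod.ext hcc1 he
      have hv : a + k = a + m := congrArg Fin.val (hinj hxe)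
      omega
    have hgcold : ∀ d, d ≤ b - a → u (g d) = false := by
      intro d hd
      rw [hg_eq d hd (by omega)]
      exact hcoldk (a + d) (by omega) (by omega) _
    rcases auxMonoRun g (b - a) hd1 hinjg with hm | hm
    · have hcf : b - a + 1 ≤ l := by
        refine hlmax (b - a + 1) ⟨g 0, ?_⟩
        intro i hi
        rw [← hm i (by omega), hgcold i (by omega), hgcold 0 (by omega)]
      exact hcf
    · have hcf : b - a + 1 ≤ l := by
        refine hlmax (b - a + 1) ⟨g (b - a), ?_⟩
        intro i hi
        have e1 := hm (b - a - i) (by omega)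
        have e2 := hm (b - a) le_rfl
        have e3 : g (b - a - i) = g (b - a) + i := by omega
        rw [← e3, hgcold (b - a - i) (by omega), hgcold (b - a) le_rfl]
      exact hcf
  -- there is a hot vertex above the minimal column
  have hPex : ∃ q : ℕ, ∃ hq : q < n + 1,
      u (x ⟨q, hq⟩).2 = true ∧ (x ⟨p, hplt⟩).1 < (x ⟨q, hq⟩).1 := by
    have hne2 : ∃ k : ℕ, ∃ hk : k + 1 ≤ n,
        (x ⟨k, by omega⟩).1 ≠ (x ⟨k + 1, by omega⟩).1 := by
      by_contra h
      push_neg at h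
      have hallc : ∀ i : Fin (n + 1), (x i).1 = (x ⟨0, by omega⟩).1 := by
        intro i
        obtain ⟨iv, hiv⟩ := i
        induction iv with
        | zero => rfl
        | succ k ih =>
          rw [← h k (by omega)]
          exact ih (by omega)
      rw [hallc a0, hallc b0] at hab0
      exact hab0 rfl
    obtain ⟨k, hk, hck⟩ := hne2
    have hdist : Nat.dist k (k + 1) = 1 := by rw [hdd]; omega
    rcases hadj' k (k + 1) (by omega) (by omega) hdist with ⟨h1, _⟩ | ⟨h1, h2⟩ | ⟨h1, h2⟩
    · exact absurd h1 hck
    · exact ⟨k + 1, by omega, h2, lt_of_le_of_lt (hmin' k (by omega)) h1⟩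
    · exact ⟨k, by omega, h2, lt_of_le_of_lt (hmin' (k + 1) (by omega)) h1⟩
  obtain ⟨q, hq, hjhot, hjcol⟩ := hPex
  have hjd : Nat.dist p q = 1 := hstar' p q hplt hq hjcol hjhot
  have hjv : (1 ≤ p ∧ q = p - 1) ∨ (q = p + 1 ∧ p + 1 ≤ n) := by
    rw [hdd] at hjd; omega
  by_cases hPL : ∃ _hp1 : 1 ≤ p,
      u (x ⟨p - 1, by omega⟩).2 = true ∧ (x ⟨p, hplt⟩).1 < (x ⟨p - 1, by omega⟩).1
  · by_cases hPR : ∃ _hpr : p + 1 ≤ n,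
        u (x ⟨p + 1, by omega⟩).2 = true ∧ (x ⟨p, hplt⟩).1 < (x ⟨p + 1, by omega⟩).1
    · -- Case A : hot vertices on both sides of the minimum
      obtain ⟨hp1, hPl1, hPl2⟩ := hPL
      obtain ⟨hpr, hPr1, hPr2⟩ := hPR
      have hA1 : p - 1 ≤ l := by
        rcases Nat.lt_or_ge p 2 with h | h
        · omega
        · have hno : ∀ k, 0 ≤ k → k ≤ p - 2 → ∀ hk : k < n + 1,
              ¬(u (x ⟨k, hk⟩).2 = true ∧ (x ⟨p, hplt⟩).1 < (x ⟨k, hk⟩).1) := by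
            intro k _ hk2 hkk ⟨hh, hc⟩
            have := hstar' p k hplt hkk hc hh
            rw [hdd] at this; omega
          have hcne : ∀ h0 : 0 < n + 1, (x ⟨0, h0⟩).1 ≠ (x ⟨p, hplt⟩).1 := by
            intro h0 hc
            have := hstar' 0 (p + 1) h0 _ (hc.trans_lt hPr2) hPr1
            rw [hdd] at this; omega
          have := hcold 0 (p - 2) (by omega) (by omega) hno hcne
          omega
      have hA2 : n - p - 1 ≤ l := by
        rcases Nat.lt_or_ge n (p + 2) with h | h
        · omega
        · have hno : ∀ k, p + 2 ≤ k → k ≤ n → ∀ hk : k < n + 1,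
              ¬(u (x ⟨k, hk⟩).2 = true ∧ (x ⟨p, hplt⟩).1 < (x ⟨k, hk⟩).1) := by
            intro k h1 h2 hkk ⟨hh, hc⟩
            have := hstar' p k hplt hkk hc hh
            rw [hdd] at this; omega
          have hcne : ∀ hpp : p + 2 < n + 1, (x ⟨p + 2, hpp⟩).1 ≠ (x ⟨p, hplt⟩).1 := by
            intro hpp hc
            have := hstar' (p + 2) (p - 1) hpp _ (hc.trans_lt hPl2) hPl1
            rw [hdd] at this; omega
          have := hcold (p + 2) n le_rfl h hno hcne
          omega
      rcases hnB with ⟨_, h6⟩ | ⟨_, h23⟩ <;> omega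
    · -- Case C' : hot only on the left : classified below as "left only"
      obtain ⟨hp1, hPl1, hPl2⟩ := hPL
      have hnop : ∀ k, p ≤ k → k ≤ n → ∀ hk : k < n + 1,
          ¬(u (x ⟨k, hk⟩).2 = true ∧ (x ⟨p, hplt⟩).1 < (x ⟨k, hk⟩).1) := by
        intro k h1 h2 hkk ⟨hh, hc⟩
        have := hstar' p k hplt hkk hc hh
        rw [hdd] at this
        have hk' : k = p + 1 := by omega
        subst hk'
        exact hPR ⟨by omega, hh, hc⟩
      have hnp : n = p := by
        by_contra hnp
        have hcc := hconst p n le_rfl (by omega) hnop n (by omega) le_rfl (by omega) hplt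
        have := hstar' n (p - 1) _ _ (hcc.trans_lt hPl2) hPl1
        rw [hdd] at this; omega
      have hno2 : ∀ k, 0 ≤ k → k ≤ p - 2 → ∀ hk : k < n + 1,
          ¬(u (x ⟨k, hk⟩).2 = true ∧ (x ⟨p, hplt⟩).1 < (x ⟨k, hk⟩).1) := by
        intro k _ h2 hkk ⟨hh, hc⟩
        have := hstar' p k hplt hkk hc hh
        rw [hdd] at this; omega
      have hcne : ∀ h0 : 0 < n + 1, (x ⟨0, h0⟩).1 ≠ (x ⟨p, hplt⟩).1 := by
        intro h0 hc
        have := hstar' 0 (p - 1) h0 _ (hc.trans_lt hPl2) hPl1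
        rw [hdd] at this; omega
      have := hcold 0 (p - 2) (by omega) (by omega) hno2 hcne
      rcases hnB with ⟨_, h6⟩ | ⟨_, h23⟩ <;> omega
  · by_cases hPR : ∃ _hpr : p + 1 ≤ n,
        u (x ⟨p + 1, by omega⟩).2 = true ∧ (x ⟨p, hplt⟩).1 < (x ⟨p + 1, by omega⟩).1
    · -- Case B : hot only on the right
      obtain ⟨hpr, hPr1, hPr2⟩ := hPR
      have hnop : ∀ k, 0 ≤ k → k ≤ p → ∀ hk : k < n + 1,
          ¬(u (x ⟨k, hk⟩).2 = true ∧ (x ⟨p, hplt⟩).1 < (x ⟨k, hk⟩).1) := by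
        intro k _ h2 hkk ⟨hh, hc⟩
        have := hstar' p k hplt hkk hc hh
        rw [hdd] at this
        have hk' : k = p - 1 ∧ 1 ≤ p := by omega
        obtain ⟨h5, h6⟩ := hk'
        subst h5
        exact hPL ⟨h6, hh, hc⟩
      have hp0 : p = 0 := by
        by_contra hp0
        have hcc := hconst 0 p hpn (by omega) hnop p (by omega) le_rfl hplt (by omega)
        have := hstar' 0 (p + 1) _ _ (hcc.symm.trans_lt hPr2) hPr1
        rw [hdd] at this; omega
      have hno2 : ∀ k, 2 ≤ k → k ≤ n → ∀ hk : k < n + 1,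
          ¬(u (x ⟨k, hk⟩).2 = true ∧ (x ⟨p, hplt⟩).1 < (x ⟨k, hk⟩).1) := by
        intro k h1 h2 hkk ⟨hh, hc⟩
        have := hstar' p k hplt hkk hc hh
        rw [hdd] at this; omega
      have hcne : ∀ h2 : 2 < n + 1, (x ⟨2, h2⟩).1 ≠ (x ⟨p, hplt⟩).1 := by
        intro h2 hc
        have hcc := hconst 2 n le_rfl (by omega) hno2 3 (by omega) (by omega) (by omega) h2
        have := hstar' 3 (p + 1) _ _ ((hcc.trans hc).trans_lt hPr2) hPr1
        rw [hdd] at this; omega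
      have := hcold 2 n le_rfl (by omega) hno2 hcne
      rcases hnB with ⟨_, h6⟩ | ⟨_, h23⟩ <;> omega
    · -- Case D : impossible, the witness q must be at p-1 or p+1
      rcases hjv with ⟨h1, h2⟩ | ⟨h2, h1⟩
      · subst h2
        exact hPL ⟨h1, hjhot, hjcol⟩
      · subst h2
        exact hPR ⟨h1, hjhot, hjcol⟩
end

section
/- Let G be a simple graph. The supremum of the diameters of the connected components of G is infinite — i.e., for every n ∈ ℕ there are two vertices in a common connected component at graph distance at least n — if and only if there is a family (A_n)_{n ∈ ℕ} of pairwise disjoint finite subsets of the vertex set of G, with no edge of G between distinct A_n, such that each induced subgraph G↾A_n is a path of length at least n that is isometric in G. -/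
open SimpleGraph

section AuxIsoPath

variable {V : Type*} {G : SimpleGraph V}

lemma myDistTriangle {u v w : V} (h1 : G.Reachable u v) (h2 : G.Reachable v w) :
    G.dist u w ≤ G.dist u v + G.dist v w := by
  obtain ⟨p, hp⟩ := h1.exists_walk_length_eq_dist
  obtain ⟨q, hq⟩ := h2.exists_walk_length_eq_dist
  rw [← hp, ← hq, ← SimpleGraph.Walk.length_append]
  exact SimpleGraph.dist_le _

lemma getVert_reach_dist {a b : V} (p : G.Walk a b) (k : ℕ) :
    ∀ i, G.Reachable (p.getVert i) (p.getVert (i + k)) ∧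
      G.dist (p.getVert i) (p.getVert (i + k)) ≤ k := by
  induction k with
  | zero => intro i; exact ⟨Reachable.refl _, by simp⟩
  | succ k ih =>
    intro i
    rcases lt_or_ge (i + k) p.length with h | h
    · have hadj := p.adj_getVert_succ h
      have hik := ih i
      refine ⟨hik.1.trans hadj.reachable, ?_⟩
      calc G.dist (p.getVert i) (p.getVert (i + k + 1))
          ≤ G.dist (p.getVert i) (p.getVert (i + k))
            + G.dist (p.getVert (i + k)) (p.getVert (i + k + 1)) :=
            myDistTriangle hik.1 hadj.reachable
        _ ≤ k + 1 := by
            have : G.dist (p.getVert (i + k)) (p.getVert (i + k + 1)) = 1 :=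
              SimpleGraph.dist_eq_one_iff_adj.mpr hadj
            omega
    · have heq : p.getVert (i + (k + 1)) = p.getVert (i + k) := by
        rw [p.getVert_of_length_le (le_trans h (by omega)), p.getVert_of_length_le h]
      rw [show i + (k + 1) = i + k + 1 from rfl] at heq ⊢
      rw [heq]
      exact ⟨(ih i).1, le_trans (ih i).2 (by omega)⟩

lemma geodesic_dist_le {a b : V} (p : G.Walk a b) {i j : ℕ} (hij : i ≤ j) :
    G.dist (p.getVert i) (p.getVert j) ≤ j - i := by
  have := (getVert_reach_dist p (j - i) i).2
  rwa [Nat.add_sub_cancel' hij] at this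

lemma geodesic_reach {a b : V} (p : G.Walk a b) (i j : ℕ) :
    G.Reachable (p.getVert i) (p.getVert j) := by
  rcases le_total i j with h | h
  · have := (getVert_reach_dist p (j - i) i).1
    rwa [Nat.add_sub_cancel' h] at this
  · have := (getVert_reach_dist p (i - j) j).1
    rw [Nat.add_sub_cancel' h] at this
    exact this.symm

lemma geodesic_dist {a b : V} (p : G.Walk a b) (hp : p.length = G.dist a b)
    {i j : ℕ} (hi : i ≤ p.length) (hj : j ≤ p.length) :
    G.dist (p.getVert i) (p.getVert j) = Nat.dist i j := by
  wlog hij : i ≤ j generalizing i j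
  · rw [SimpleGraph.dist_comm, Nat.dist_comm]
    exact this hj hi (by omega)
  rw [Nat.dist_eq_sub_of_le hij]
  refine le_antisymm (geodesic_dist_le p hij) ?_
  -- lower bound
  have h1 : G.dist a (p.getVert i) ≤ i := by
    have := geodesic_dist_le p (Nat.zero_le i)
    simpa using this
  have h2 : G.dist (p.getVert j) b ≤ p.length - j := by
    have := geodesic_dist_le p hj
    rwa [p.getVert_length] at this
  have hr1 : G.Reachable a (p.getVert i) := by
    have := geodesic_reach p 0 i; simpa using this
  have hr2 : G.Reachable (p.getVert i) (p.getVert j) := geodesic_reach p i j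
  have hr3 : G.Reachable (p.getVert j) b := by
    have := geodesic_reach p j p.length; rwa [p.getVert_length] at this
  have tri : G.dist a b ≤ G.dist a (p.getVert i) +
      (G.dist (p.getVert i) (p.getVert j) + G.dist (p.getVert j) b) :=
    le_trans (myDistTriangle hr1 (hr2.trans hr3))
      (by exact Nat.add_le_add_left (myDistTriangle hr2 hr3) _)
  omega

lemma near_aux {s y : V} {G : SimpleGraph V} (h : G.Adj s y ∨ s = y) :
    G.Reachable s y ∧ G.dist s y ≤ 1 := by
  rcases h with h | rfl
  · exact ⟨h.reachable, le_of_eq (SimpleGraph.dist_eq_one_iff_adj.mpr h)⟩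
  · exact ⟨Reachable.refl _, by rw [SimpleGraph.dist_self]; omega⟩

lemma step_lemma (H : ∀ n : ℕ, ∃ a b : V, G.Reachable a b ∧ n ≤ G.dist a b)
    (S : Set V) (hS : S.Finite) (ℓ : ℕ) :
    ∃ x : Fin (ℓ + 1) → V, Function.Injective x ∧
      (∀ i j, G.Adj (x i) (x j) ↔ Nat.dist i.val j.val = 1) ∧
      (∀ i j, G.dist (x i) (x j) = Nat.dist i.val j.val) ∧
      ∀ i, ∀ s ∈ S, ¬ G.Adj s (x i) ∧ x i ≠ s := by
  classical
  set c := hS.toFinset.card with hc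
  obtain ⟨a, b, hab, hN⟩ := H ((c + 1) * (ℓ + 5))
  obtain ⟨p, hp⟩ := hab.exists_walk_length_eq_dist
  have hL : (c + 1) * (ℓ + 5) ≤ p.length := by omega
  have hmul : ∀ t : ℕ, t ≤ c → t * (ℓ + 5) + ℓ ≤ p.length := by
    intro t ht
    have h1 : t * (ℓ + 5) ≤ c * (ℓ + 5) := Nat.mul_le_mul_right _ ht
    have h2 : (c + 1) * (ℓ + 5) = c * (ℓ + 5) + (ℓ + 5) := by ring
    omega
  -- find a clean window
  have key : ∃ t ≤ c, ∀ i, t * (ℓ + 5) ≤ i → i ≤ t * (ℓ + 5) + ℓ →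
      ∀ s ∈ S, ¬ (G.Adj s (p.getVert i) ∨ s = p.getVert i) := by
    by_contra hcon
    push_neg at hcon
    choose idx hidx1 hidx2 s hsS hbad using hcon
    have hmaps : ∀ t : Fin (c + 1), t ∈ Finset.univ →
        s t.1 (Nat.lt_succ_iff.mp t.2) ∈ hS.toFinset := by
      intro t _
      exact hS.mem_toFinset.mpr (hsS t.1 _)
    have hcard : hS.toFinset.card < (Finset.univ : Finset (Fin (c + 1))).card := by
      rw [Finset.card_univ, Fintype.card_fin]
      omega
    obtain ⟨t₁, _, t₂, _, hne, heq⟩ :=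
      Finset.exists_ne_map_eq_of_card_lt_of_maps_to hcard hmaps
    have main : ∀ u v : Fin (c + 1), u.1 < v.1 →
        s u.1 (Nat.lt_succ_iff.mp u.2) = s v.1 (Nat.lt_succ_iff.mp v.2) → False := by
      intro u v huv he
      have hu : u.1 ≤ c := Nat.lt_succ_iff.mp u.2
      have hv : v.1 ≤ c := Nat.lt_succ_iff.mp v.2
      have n1 := near_aux (hbad u.1 hu)
      have n2 := near_aux (hbad v.1 hv)
      have he' : s u.1 hu = s v.1 hv := he
      have hdij : G.dist (p.getVert (idx u.1 hu)) (p.getVert (idx v.1 hv)) ≤ 2 := by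
        have tri := myDistTriangle n1.1.symm (he' ▸ n2.1)
        have b1 : G.dist (p.getVert (idx u.1 hu)) (s u.1 hu) ≤ 1 := by
          rw [SimpleGraph.dist_comm]; exact n1.2
        have b2 : G.dist (s u.1 hu) (p.getVert (idx v.1 hv)) ≤ 1 := by
          rw [he']; exact n2.2
        omega
      have hgeo := geodesic_dist p hp
        (le_trans (hidx2 u.1 hu) (hmul u.1 hu)) (le_trans (hidx2 v.1 hv) (hmul v.1 hv))
      rw [hgeo] at hdij
      have hii := hidx1 u.1 hu
      have hjj := hidx1 v.1 hv
      have hi2 := hidx2 u.1 hu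
      have nl : (u.1 + 1) * (ℓ + 5) ≤ v.1 * (ℓ + 5) := Nat.mul_le_mul_right _ huv
      have nl2 : (u.1 + 1) * (ℓ + 5) = u.1 * (ℓ + 5) + (ℓ + 5) := by ring
      simp only [Nat.dist] at hdij
      omega
    rcases hne.lt_or_gt with h | h
    · exact main t₁ t₂ h heq
    · exact main t₂ t₁ h heq.symm
  obtain ⟨t, htc, hclean⟩ := key
  have hwin : t * (ℓ + 5) + ℓ ≤ p.length := hmul t htc
  have hdist : ∀ i j : Fin (ℓ + 1),
      G.dist (p.getVert (t * (ℓ + 5) + i.val)) (p.getVert (t * (ℓ + 5) + j.val))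
        = Nat.dist i.val j.val := by
    intro i j
    rw [geodesic_dist p hp (by omega) (by omega)]
    simp only [Nat.dist]; omega
  refine ⟨fun i => p.getVert (t * (ℓ + 5) + i.val), ?_, ?_, hdist, ?_⟩
  · intro i j hij
    have hij' : p.getVert (t * (ℓ + 5) + i.val) = p.getVert (t * (ℓ + 5) + j.val) := hij
    have h0 : Nat.dist i.val j.val = 0 := by
      rw [← hdist i j, hij', SimpleGraph.dist_self]
    exact Fin.ext (Nat.eq_of_dist_eq_zero h0)
  · intro i j
    rw [← SimpleGraph.dist_eq_one_iff_adj]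
    rw [show G.dist (p.getVert (t * (ℓ + 5) + i.val)) (p.getVert (t * (ℓ + 5) + j.val))
        = Nat.dist i.val j.val from hdist i j]
  · intro i s hs
    have := hclean (t * (ℓ + 5) + i.val) (by omega) (by omega) s hs
    push_neg at this
    exact ⟨this.1, fun h => this.2 h.symm⟩

noncomputable def seqFun {V : Type*} (G : SimpleGraph V)
    (H : ∀ n : ℕ, ∃ a b : V, G.Reachable a b ∧ n ≤ G.dist a b) :
    (n : ℕ) → Fin (n + 1) → V
  | n => (step_lemma H (⋃ k : Fin n, Set.range (seqFun G H k.1))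
      (Set.finite_iUnion fun k => Set.finite_range _) n).choose
termination_by n => n
decreasing_by all_goals exact k.2

lemma seqFun_spec {V : Type*} (G : SimpleGraph V)
    (H : ∀ n : ℕ, ∃ a b : V, G.Reachable a b ∧ n ≤ G.dist a b) (n : ℕ) :
    Function.Injective (seqFun G H n) ∧
    (∀ i j, G.Adj (seqFun G H n i) (seqFun G H n j) ↔ Nat.dist i.val j.val = 1) ∧
    (∀ i j, G.dist (seqFun G H n i) (seqFun G H n j) = Nat.dist i.val j.val) ∧
    ∀ i, ∀ s ∈ ⋃ k : Fin n, Set.range (seqFun G H k.1),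
      ¬ G.Adj s (seqFun G H n i) ∧ seqFun G H n i ≠ s := by
  have e : seqFun G H n = (step_lemma H (⋃ k : Fin n, Set.range (seqFun G H k.1))
      (Set.finite_iUnion fun k => Set.finite_range _) n).choose := by
    conv_lhs => rw [seqFun]
  rw [e]
  exact (step_lemma H (⋃ k : Fin n, Set.range (seqFun G H k.1))
      (Set.finite_iUnion fun k => Set.finite_range _) n).choose_spec

end AuxIsoPath

theorem unbounded_component_diameters_iff_direct_sum_of_isometric_paths
    {V : Type*} (G : SimpleGraph V) :
    (∀ n : ℕ, ∃ a b : V, G.Reachable a b ∧ n ≤ G.dist a b) ↔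
      ∃ A : ℕ → Set V, (∀ n, (A n).Finite) ∧
        (∀ m n, m ≠ n → Disjoint (A m) (A n)) ∧
        (∀ m n, m ≠ n → ∀ x ∈ A m, ∀ y ∈ A n, ¬ G.Adj x y) ∧
        ∀ n, ∃ m, n ≤ m ∧ IsIsometricPathOn G (A n) m := by
  constructor
  · intro H
    have spec := seqFun_spec G H
    refine ⟨fun n => Set.range (seqFun G H n), fun n => Set.finite_range _, ?_, ?_, ?_⟩
    · have key : ∀ m n, m < n →
          Disjoint (Set.range (seqFun G H m)) (Set.range (seqFun G H n)) := by
        intro m n hmn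
        rw [Set.disjoint_left]
        rintro x ⟨j, rfl⟩ ⟨i, hi⟩
        exact ((spec n).2.2.2 i (seqFun G H m j)
          (Set.mem_iUnion.mpr ⟨⟨m, hmn⟩, ⟨j, rfl⟩⟩)).2 hi
      intro m n hmn
      rcases hmn.lt_or_gt with h | h
      · exact key m n h
      · exact (key n m h).symm
    · have key : ∀ m n, m < n → ∀ x ∈ Set.range (seqFun G H m),
          ∀ y ∈ Set.range (seqFun G H n), ¬ G.Adj x y := by
        rintro m n hmn x ⟨j, rfl⟩ y ⟨i, rfl⟩
        exact ((spec n).2.2.2 i (seqFun G H m j)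
          (Set.mem_iUnion.mpr ⟨⟨m, hmn⟩, ⟨j, rfl⟩⟩)).1
      intro m n hmn x hx y hy
      rcases hmn.lt_or_gt with h | h
      · exact key m n h x hx y hy
      · exact fun hadj => key n m h y hy x hx hadj.symm
    · intro n
      exact ⟨n, le_rfl, seqFun G H n, (spec n).1, rfl, (spec n).2.1, (spec n).2.2.1⟩
  · rintro ⟨A, hfin, hdisj, hadj, hpath⟩ n
    obtain ⟨m, hnm, x, hinj, hrange, hadjiff, hdist⟩ := hpath n
    have hd : G.dist (x 0) (x ⟨m, Nat.lt_succ_self m⟩) = m := by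
      rw [hdist]
      simp [Nat.dist]
    refine ⟨x 0, x ⟨m, Nat.lt_succ_self m⟩, ?_, by omega⟩
    rcases Nat.eq_zero_or_pos m with rfl | hm
    · have h0 : (0 : Fin (0 + 1)) = ⟨0, Nat.lt_succ_self 0⟩ := by
        apply Fin.ext; simp
      rw [h0]
    · exact SimpleGraph.Reachable.of_dist_ne_zero (by omega)
end
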